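/- Let φ be uniformly distributed over [0,2π). For every real x with |x| ≤ 1, the expectation E[log₂(1 − x·cos φ)] equals log₂(1 + √(1 − x²)) − 1; equivalently, (1/(2π))·∫₀^{2π} log₂(1 − x·cos φ) dφ = log₂(1 + √(1 − x²)) − 1. -/

import Mathlib

open MeasureTheory Real
open intervalIntegral

noncomputable def ff (r : ℝ) (φ : ℝ) : ℝ := Real.log (1 - 2*r*Real.cos φ + r^2)

-- integrability of ff 1 on [0, π]
lemma ffint_basic : IntervalIntegrable (ff 1) volume 0 π := by
  have hdom : IntervalIntegrable (fun φ : ℝ => 4*φ^(-(1/2):ℝ) + (2*Real.log π + Real.log (π^2/4)))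
      volume 0 π :=
    ((intervalIntegrable_rpow' (by norm_num)).const_mul 4).add intervalIntegrable_const
  apply hdom.mono_fun
  · exact ((Real.measurable_log.comp (by fun_prop)).aestronglyMeasurable)
  · rw [Filter.EventuallyLE, ae_restrict_iff' measurableSet_uIoc]
    refine Filter.Eventually.of_forall (fun φ hφ => ?_)
    rw [Set.uIoc_of_le Real.pi_pos.le] at hφ
    obtain ⟨h0, hπ⟩ := hφ
    have hq : 4/π^2 * φ^2 ≤ 2 - 2*Real.cos φ := by
      have h := Real.cos_le_one_sub_mul_cos_sq (x := φ) (by rw [abs_of_pos h0]; exact hπ)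
      have : 4/π^2*φ^2 = 2*(2/π^2*φ^2) := by ring
      linarith
    have hc : 0 < 2 - 2*Real.cos φ := lt_of_lt_of_le (by positivity) hq
    have hub : Real.log (2 - 2*Real.cos φ) ≤ 2 * Real.log φ := by
      have h1 : 2 - 2*Real.cos φ ≤ φ^2 := by nlinarith [Real.one_sub_sq_div_two_le_cos (x := φ)]
      calc Real.log (2 - 2*Real.cos φ) ≤ Real.log (φ^2) := Real.log_le_log hc h1
        _ = 2 * Real.log φ := by rw [Real.log_pow]; push_cast; ring
    have hlb : 2 * Real.log φ - Real.log (π^2/4) ≤ Real.log (2 - 2*Real.cos φ) := by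
      have h2 : Real.log (4/π^2 * φ^2) ≤ Real.log (2 - 2*Real.cos φ) :=
        Real.log_le_log (by positivity) hq
      rw [Real.log_mul (by positivity) (by positivity), Real.log_pow] at h2
      have h3 : Real.log (4/π^2) = - Real.log (π^2/4) := by
        rw [← Real.log_inv]; norm_num
      push_cast at h2
      linarith
    have habs : |Real.log (2 - 2*Real.cos φ)| ≤ 2*|Real.log φ| + Real.log (π^2/4) := by
      have hcpos : (0:ℝ) ≤ Real.log (π^2/4) := by
        apply Real.log_nonneg; nlinarith [Real.pi_gt_three]
      rw [abs_le]
      constructor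
      · nlinarith [neg_abs_le (Real.log φ)]
      · nlinarith [le_abs_self (Real.log φ)]
    have hlog : |Real.log φ| ≤ 2*φ^(-(1/2):ℝ) + Real.log π := by
      have hppos : (0:ℝ) ≤ Real.log π := Real.log_nonneg (by nlinarith [Real.pi_gt_three])
      have hrp : (0:ℝ) ≤ φ^(-(1/2):ℝ) := Real.rpow_nonneg h0.le _
      rcases le_or_gt φ 1 with h1 | h1
      · have : -Real.log φ = 2 * Real.log (φ^(-(1/2):ℝ)) := by
          rw [Real.log_rpow h0]; ring
        have h2 : Real.log (φ^(-(1/2):ℝ)) ≤ φ^(-(1/2):ℝ) :=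
          (Real.log_le_sub_one_of_pos (by positivity)).trans (by linarith)
        rw [abs_of_nonpos (Real.log_nonpos h0.le h1)]
        linarith
      · rw [abs_of_nonneg (Real.log_nonneg h1.le)]
        have := Real.log_le_log (by linarith) hπ
        linarith
    have hval : ff 1 φ = Real.log (2 - 2*Real.cos φ) := by
      unfold ff; norm_num; ring_nf
    show ‖ff 1 φ‖ ≤ _
    rw [Real.norm_eq_abs, Real.norm_eq_abs, hval]
    have : (0:ℝ) ≤ 4*φ^(-(1/2):ℝ) + (2*Real.log π + Real.log (π^2/4)) := by
      have hppos : (0:ℝ) ≤ Real.log π := Real.log_nonneg (by nlinarith [Real.pi_gt_three])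
      have hcpos : (0:ℝ) ≤ Real.log (π^2/4) := by
        apply Real.log_nonneg; nlinarith [Real.pi_gt_three]
      have hrp : (0:ℝ) ≤ φ^(-(1/2):ℝ) := Real.rpow_nonneg h0.le _
      linarith
    rw [abs_of_nonneg this]
    linarith

lemma ff_periodic (r : ℝ) : Function.Periodic (ff r) (2*π) := fun φ => by
  simp [ff, Real.cos_add_two_pi]

lemma ffint_0_2pi : IntervalIntegrable (ff 1) volume 0 (2*π) := by
  have hrefl : IntervalIntegrable (ff 1) volume π (2*π) := by
    have h := ffint_basic.comp_sub_left (2*π)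
    have he : (fun x => ff 1 (2*π - x)) = ff 1 := by
      funext x; simp [ff, Real.cos_two_pi_sub]
    rw [he] at h
    simpa only [show 2*π - π = π by ring, show 2*π - 0 = 2*π by ring] using h.symm
  exact ffint_basic.trans hrefl

lemma ffint_0_4pi : IntervalIntegrable (ff 1) volume 0 (4*π) := by
  have hs : IntervalIntegrable (ff 1) volume (2*π) (4*π) := by
    have h := ffint_0_2pi.comp_sub_right (2*π)
    have he : (fun x => ff 1 (x - 2*π)) = ff 1 := by
      funext x
      have := (ff_periodic 1).sub_eq x
      simpa using this
    rw [he] at h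
    simpa only [show (0:ℝ) + 2*π = 2*π by ring, show 2*π + 2*π = 4*π by ring] using h
  exact ffint_0_2pi.trans hs

lemma ffint_neg1 : IntervalIntegrable (ff (-1)) volume 0 (2*π) := by
  have hsub : IntervalIntegrable (ff 1) volume π (3*π) := by
    apply ffint_0_4pi.mono_set
    rw [Set.uIcc_of_le (by nlinarith [Real.pi_pos] : π ≤ 3*π),
      Set.uIcc_of_le (by nlinarith [Real.pi_pos] : (0:ℝ) ≤ 4*π)]
    apply Set.Icc_subset_Icc <;> nlinarith [Real.pi_pos]
  have h := hsub.comp_add_right π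
  have he : (fun x => ff 1 (x + π)) = ff (-1) := by
    funext x; unfold ff; rw [Real.cos_add_pi]; norm_num
  rw [he] at h
  simpa only [show π - π = (0:ℝ) by ring, show 3*π - π = 2*π by ring] using h

noncomputable def FF (r : ℝ) : ℝ := ∫ φ in (0:ℝ)..(2*π), ff r φ

lemma ff_pos {r : ℝ} (hr : |r| < 1) (φ : ℝ) : 0 < 1 - 2*r*Real.cos φ + r^2 := by
  have h1 := Real.neg_one_le_cos φ
  have h2 := Real.cos_le_one φ
  obtain ⟨ha, hb⟩ := abs_lt.1 hr
  nlinarith [sq_nonneg (r - Real.cos φ), Real.sin_sq_add_cos_sq φ, sq_nonneg (Real.sin φ),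
    mul_pos (show (0:ℝ) < 1 - r by linarith) (show (0:ℝ) < 1 + r by linarith),
    mul_nonneg (show (0:ℝ) ≤ 1 - Real.cos φ by linarith) (show (0:ℝ) ≤ 1 + Real.cos φ by linarith)]

lemma ff_cont {r : ℝ} (hr : |r| < 1) : Continuous (ff r) :=
  (continuous_const.sub (continuous_const.mul Real.continuous_cos)
    |>.add continuous_const).log (fun φ => (ff_pos hr φ).ne')

lemma ff_pos_of_sin {r : ℝ} {φ : ℝ} (hφ : Real.sin φ ≠ 0) :
    0 < 1 - 2*r*Real.cos φ + r^2 := by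
  have h : 1 - 2*r*Real.cos φ + r^2 = (r - Real.cos φ)^2 + (Real.sin φ)^2 := by
    have := Real.sin_sq_add_cos_sq φ; nlinarith
  rw [h]
  have : 0 < (Real.sin φ)^2 := by positivity
  nlinarith [sq_nonneg (r - Real.cos φ)]

lemma ae_sin_ne : ∀ᵐ φ : ℝ ∂volume, Real.sin φ ≠ 0 := by
  rw [MeasureTheory.ae_iff]
  push_neg
  have hsub : {φ : ℝ | Real.sin φ = 0} ⊆ Set.range (fun n : ℤ => (n:ℝ) * π) := by
    intro φ hφ
    rcases Real.sin_eq_zero_iff.1 hφ with ⟨n, hn⟩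
    exact ⟨n, hn⟩
  exact measure_mono_null hsub ((Set.countable_range _).measure_zero _)

lemma FF_neg (r : ℝ) : FF (-r) = FF r := by
  have he : ff (-r) = fun φ => ff r (φ + π) := by
    funext φ; unfold ff; rw [Real.cos_add_pi]; ring_nf
  unfold FF
  rw [he, intervalIntegral.integral_comp_add_right]
  have h := (ff_periodic r).intervalIntegral_add_eq π 0
  simpa [show π + 2*π = 2*π + π by ring, zero_add] using h

lemma FF_doubling {r : ℝ} (hr : |r| ≤ 1)
    (h2 : IntervalIntegrable (ff r) volume 0 (2*π))
    (h2n : IntervalIntegrable (ff (-r)) volume 0 (2*π))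
    (h4 : IntervalIntegrable (ff (r^2)) volume 0 (2*π))
    (h4' : IntervalIntegrable (ff (r^2)) volume (2*π) (4*π)) :
    FF (r^2) = 2 * FF r := by
  have hJ : (∫ φ in (0:ℝ)..(2*π), ff (r^2) (2*φ)) = FF (r^2) := by
    rw [intervalIntegral.integral_comp_mul_left (ff (r^2)) two_ne_zero]
    rw [show (2:ℝ)*0 = 0 by ring, show (2:ℝ)*(2*π) = 4*π by ring]
    rw [← intervalIntegral.integral_add_adjacent_intervals h4 h4']
    have hper : (∫ φ in (2*π:ℝ)..(4*π), ff (r^2) φ) = FF (r^2) := by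
      have h := (ff_periodic (r^2)).intervalIntegral_add_eq (2*π) 0
      simpa [FF, show 2*π + 2*π = 4*π by ring] using h
    unfold FF
    rw [hper]
    unfold FF
    ring_nf
  have hsplit : (∫ φ in (0:ℝ)..(2*π), ff (r^2) (2*φ))
      = ∫ φ in (0:ℝ)..(2*π), (ff r φ + ff (-r) φ) := by
    apply intervalIntegral.integral_congr_ae
    filter_upwards [ae_sin_ne] with φ hφ _
    have hA : 0 < 1 - 2*r*Real.cos φ + r^2 := ff_pos_of_sin hφ
    have hB : 0 < 1 - 2*(-r)*Real.cos φ + (-r)^2 := ff_pos_of_sin hφ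
    have hid : 1 - 2*r^2*Real.cos (2*φ) + (r^2)^2
        = (1 - 2*r*Real.cos φ + r^2) * (1 - 2*(-r)*Real.cos φ + (-r)^2) := by
      rw [Real.cos_two_mul]; ring
    unfold ff
    rw [hid, Real.log_mul hA.ne' hB.ne']
  rw [hsplit, intervalIntegral.integral_add h2 h2n] at hJ
  have := FF_neg r
  unfold FF at *
  linarith

lemma FF_bound {r : ℝ} (hr : |r| ≤ 1/2) : |FF r| ≤ Real.log 4 * (2*π) := by
  have h : ∀ φ ∈ Set.uIoc (0:ℝ) (2*π), ‖ff r φ‖ ≤ Real.log 4 := by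
    intro φ _
    have h1 := Real.neg_one_le_cos φ
    have h2 := Real.cos_le_one φ
    obtain ⟨ha, hb⟩ := abs_le.1 hr
    have hub : 1 - 2*r*Real.cos φ + r^2 ≤ 4 := by nlinarith
    have h5 : (1/4:ℝ) ≤ (1-r)^2 := by nlinarith
    have h6 : (1/4:ℝ) ≤ (1+r)^2 := by nlinarith
    have hlb : (1/4 : ℝ) ≤ 1 - 2*r*Real.cos φ + r^2 := by
      nlinarith [mul_le_mul_of_nonneg_left h5 (show (0:ℝ) ≤ 1 + Real.cos φ by linarith),
        mul_le_mul_of_nonneg_left h6 (show (0:ℝ) ≤ 1 - Real.cos φ by linarith)]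
    rw [Real.norm_eq_abs, abs_le]
    constructor
    · have : Real.log (1/4) ≤ Real.log (1 - 2*r*Real.cos φ + r^2) :=
        Real.log_le_log (by norm_num) hlb
      have h4 : Real.log (1/4:ℝ) = -Real.log 4 := by
        rw [show (1/4:ℝ) = 4⁻¹ by norm_num, Real.log_inv]
      unfold ff; linarith
    · unfold ff
      exact (Real.log_le_log (by linarith) hub)
  have := intervalIntegral.norm_integral_le_of_norm_le_const h
  simpa [FF, Real.norm_eq_abs, abs_of_nonneg Real.two_pi_pos.le] using this

lemma FF_zero {r : ℝ} (hr : |r| < 1) : FF r = 0 := by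
  have hint : ∀ s : ℝ, |s| < 1 → ∀ a b : ℝ, IntervalIntegrable (ff s) volume a b :=
    fun s hs a b => (ff_cont hs).intervalIntegrable a b
  have hiter : ∀ n : ℕ, FF (r ^ (2^n)) = 2^n * FF r := by
    intro n
    induction n with
    | zero => simp
    | succ n ih =>
        have habs : |r ^ (2^n)| < 1 := by
          rw [abs_pow]
          exact pow_lt_one₀ (abs_nonneg r) hr (by positivity)
        have hd := FF_doubling habs.le (hint _ habs 0 (2*π))
          (by
            have : |-(r ^ (2^n))| < 1 := by rwa [abs_neg]
            exact hint _ this 0 (2*π))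
          (by
            have : |(r ^ (2^n))^2| < 1 := by
              rw [abs_pow]; exact pow_lt_one₀ (abs_nonneg _) habs (by norm_num)
            exact hint _ this 0 (2*π))
          (by
            have : |(r ^ (2^n))^2| < 1 := by
              rw [abs_pow]; exact pow_lt_one₀ (abs_nonneg _) habs (by norm_num)
            exact hint _ this (2*π) (4*π))
        rw [show (2:ℕ)^(n+1) = 2^n * 2 by ring, pow_mul, hd, ih]
        ring
  have hsmall : ∀ᶠ n : ℕ in Filter.atTop, |FF r| ≤ Real.log 4 * (2*π) / 2^n := by
    have htend : Filter.Tendsto (fun n : ℕ => |r| ^ n) Filter.atTop (nhds 0) :=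
      tendsto_pow_atTop_nhds_zero_of_lt_one (abs_nonneg r) hr
    have hev : ∀ᶠ n : ℕ in Filter.atTop, |r| ^ n ≤ 1/2 :=
      htend.eventually_le_const (show (0:ℝ) < 1/2 by norm_num)
    filter_upwards [hev] with n hn
    have hb : |r ^ (2^n)| ≤ 1/2 := by
      rw [abs_pow]
      calc |r| ^ (2^n) ≤ |r| ^ n :=
            pow_le_pow_of_le_one (abs_nonneg r) hr.le (Nat.le_of_lt (Nat.lt_two_pow_self (n := n)))
        _ ≤ 1/2 := hn
    have hB := FF_bound hb
    rw [hiter n, abs_mul, abs_pow, abs_two] at hB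
    rw [le_div_iff₀ (by positivity : (0:ℝ) < 2^n)]
    nlinarith [hB]
  have htend0 : Filter.Tendsto (fun n : ℕ => Real.log 4 * (2*π) / 2^n)
      Filter.atTop (nhds 0) :=
    Filter.Tendsto.div_atTop tendsto_const_nhds
      (tendsto_pow_atTop_atTop_of_one_lt (by norm_num : (1:ℝ) < 2))
  have hle : |FF r| ≤ 0 := ge_of_tendsto htend0 hsmall
  exact abs_nonpos_iff.1 hle

lemma FF_one : FF 1 = 0 := by
  have h4' : IntervalIntegrable (ff 1) volume (2*π) (4*π) := by
    apply ffint_0_4pi.mono_set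
    rw [Set.uIcc_of_le (by nlinarith [Real.pi_pos] : 2*π ≤ 4*π),
      Set.uIcc_of_le (by nlinarith [Real.pi_pos] : (0:ℝ) ≤ 4*π)]
    apply Set.Icc_subset_Icc <;> nlinarith [Real.pi_pos]
  have hd := FF_doubling (r := 1) (by norm_num) ffint_0_2pi ffint_neg1
    (by simpa using ffint_0_2pi) (by simpa using h4')
  simp only [one_pow] at hd
  linarith

lemma FF_eq_zero {r : ℝ} (hr : |r| ≤ 1) : FF r = 0 := by
  rcases lt_or_eq_of_le hr with h | h
  · exact FF_zero h
  · rcases abs_eq (by norm_num : (0:ℝ) ≤ 1) |>.1 h with h1 | h1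
    · rw [h1]; exact FF_one
    · rw [h1, show (-1:ℝ) = -(1:ℝ) by norm_num, FF_neg]; exact FF_one

lemma ff_integrable {r : ℝ} (hr : |r| ≤ 1) : IntervalIntegrable (ff r) volume 0 (2*π) := by
  rcases lt_or_eq_of_le hr with h | h
  · exact (ff_cont h).intervalIntegrable 0 (2*π)
  · rcases abs_eq (by norm_num : (0:ℝ) ≤ 1) |>.1 h with h1 | h1
    · rw [h1]; exact ffint_0_2pi
    · rw [h1]; exact ffint_neg1

/-- For `φ` uniform on `[0, 2π)` and `|x| ≤ 1`,
`E[log₂(1 − x cos φ)] = log₂(1 + √(1 − x²)) − 1`. -/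
theorem uniform_phase_log_integral (x : ℝ) (hx : |x| ≤ 1) :
    (1 / (2 * π)) * (∫ φ in (0:ℝ)..(2 * π), Real.logb 2 (1 - x * Real.cos φ)) =
      Real.logb 2 (1 + Real.sqrt (1 - x ^ 2)) - 1 := by
  set s := Real.sqrt (1 - x^2) with hs_def
  have hx2 : x^2 ≤ 1 := by nlinarith [abs_le.1 hx |>.1, abs_le.1 hx |>.2, sq_abs x]
  have hs0 : 0 ≤ s := Real.sqrt_nonneg _
  have hss : s^2 = 1 - x^2 := Real.sq_sqrt (by linarith)
  have hs1p : (0:ℝ) < 1 + s := by linarith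
  set r := x / (1 + s) with hr_def
  have hr1 : |r| ≤ 1 := by
    rw [hr_def, abs_div, abs_of_pos hs1p, div_le_one hs1p]
    calc |x| ≤ 1 := hx
      _ ≤ 1 + s := by linarith
  have hkey : x * (1 + r^2) = 2 * r := by
    rw [hr_def]
    field_simp
    linear_combination x*hss
  have h1r2 : (0:ℝ) < 1 + r^2 := by positivity
  have hval : 1 + r^2 = 2 / (1 + s) := by
    rw [hr_def]
    field_simp
    linear_combination hss
  -- the log integral
  have hint : (∫ φ in (0:ℝ)..(2*π), Real.log (1 - x * Real.cos φ))
      = -(2*π) * Real.log (1 + r^2) := by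
    have hcongr : (∫ φ in (0:ℝ)..(2*π), Real.log (1 - x * Real.cos φ))
        = ∫ φ in (0:ℝ)..(2*π), (ff r φ - Real.log (1 + r^2)) := by
      apply intervalIntegral.integral_congr_ae
      filter_upwards [ae_sin_ne] with φ hφ _
      have hA : 0 < 1 - 2*r*Real.cos φ + r^2 := ff_pos_of_sin hφ
      have hxc : 1 - x * Real.cos φ = (1 - 2*r*Real.cos φ + r^2) / (1 + r^2) := by
        rw [eq_div_iff h1r2.ne']
        linear_combination (-Real.cos φ) * hkey
      rw [hxc, Real.log_div hA.ne' h1r2.ne']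
      rfl
    rw [hcongr, intervalIntegral.integral_sub (ff_integrable hr1) intervalIntegrable_const,
      intervalIntegral.integral_const]
    have hFF : (∫ φ in (0:ℝ)..(2*π), ff r φ) = 0 := FF_eq_zero hr1
    rw [hFF]
    rw [smul_eq_mul]
    ring
  -- convert logb
  have hlog2 : Real.log 2 ≠ 0 := (Real.log_pos one_lt_two).ne'
  have hlogb : (∫ φ in (0:ℝ)..(2 * π), Real.logb 2 (1 - x * Real.cos φ))
      = (∫ φ in (0:ℝ)..(2*π), Real.log (1 - x * Real.cos φ)) / Real.log 2 := by
    simp only [Real.logb]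
    exact intervalIntegral.integral_div _ _
  rw [hlogb, hint, hval, Real.log_div two_ne_zero hs1p.ne']
  simp only [Real.logb]
  have hpi : π ≠ 0 := Real.pi_ne_zero
  field_simp
  ring
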